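/- Let φ be a flow, and let z* be a periodic point with minimal positive period T(z*) (i.e. φ(T(z*), z*) = z* and no s with 0 < s < T(z*) satisfies φ(s, z*) = z*). Let σ be an involution on the orbit γ of z* (σ∘σ = id on γ) satisfying the symmetry relation σ(φ(t,z)) = φ(t, σ(z)) for all t and all z ∈ γ, and suppose σ(γ) ⊆ γ. Then for every z ∈ γ, either σ(z) = z or σ(z) = φ(T(z*)/2, z). -/
import Mathlib


/-- An involution `σ` of the orbit `γ` of a point `z*` with minimal
positive period `T`, which is a symmetry of the flow on `γ` and maps `γ` into `γ`,
satisfies at each point of `γ`: either `σ z = z` or `σ z = φ (T / 2) z`. -/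
theorem symmetric_involution_on_cycle_dichotomy {α : Type*} (φ : ℝ → α → α)
    (σ : α → α) (zs : α) (T : ℝ)
    (hφ0 : ∀ z, φ 0 z = z)
    (hφadd : ∀ s t z, φ (s + t) z = φ s (φ t z))
    (hTpos : 0 < T)
    (hper : φ T zs = zs)
    (hmin : ∀ s : ℝ, 0 < s → s < T → φ s zs ≠ zs)
    (hmaps : ∀ z ∈ {w : α | ∃ t : ℝ, w = φ t zs}, σ z ∈ {w : α | ∃ t : ℝ, w = φ t zs})
    (hinv : ∀ z ∈ {w : α | ∃ t : ℝ, w = φ t zs}, σ (σ z) = z)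
    (hsym : ∀ (t : ℝ), ∀ z ∈ {w : α | ∃ s : ℝ, w = φ s zs}, σ (φ t z) = φ t (σ z)) :
    ∀ z ∈ {w : α | ∃ t : ℝ, w = φ t zs}, σ z = z ∨ σ z = φ (T / 2) z := by
  -- zs is in the orbit
  have hzs : zs ∈ {w : α | ∃ t : ℝ, w = φ t zs} := ⟨0, (hφ0 zs).symm⟩
  -- φ (n • T) zs = zs for integer n
  have hnat : ∀ n : ℕ, φ (n * T) zs = zs := by
    intro n
    induction n with
    | zero => simpa using hφ0 zs
    | succ k ih =>
      have : ((k : ℝ) + 1) * T = (k : ℝ) * T + T := by ring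
      push_cast
      rw [this, hφadd, hper, ih]
  have hint : ∀ n : ℤ, φ (n * T) zs = zs := by
    intro n
    rcases n.eq_nat_or_neg with ⟨m, hm | hm⟩
    · subst hm; exact_mod_cast hnat m
    · subst hm
      have h1 : φ (-((m:ℝ) * T) + (m:ℝ) * T) zs = φ (-((m:ℝ)*T)) (φ ((m:ℝ)*T) zs) :=
        hφadd _ _ _
      rw [hnat m, neg_add_cancel, hφ0] at h1
      push_cast
      rw [neg_mul]
      exact h1.symm
  -- if φ s zs = zs then s ∈ T ℤ
  have hstab : ∀ s : ℝ, φ s zs = zs → ∃ n : ℤ, s = n * T := by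
    intro s hs
    set n := ⌊s / T⌋ with hn
    have hr0 : 0 ≤ s - n * T := by
      have h := (le_div_iff₀ hTpos).mp (Int.floor_le (s / T))
      linarith
    have hrT : s - n * T < T := by
      have h := (div_lt_iff₀ hTpos).mp (Int.lt_floor_add_one (s / T))
      push_cast at h
      linarith
    have hrper : φ (s - n * T) zs = zs := by
      have : φ (s - n * T) (φ ((-n : ℤ) * T) zs) = φ (s - n * T + (-n : ℤ) * T) zs := by
        rw [hφadd]
      rw [hint (-n)] at this
      rw [this]
      have h2 : s - (n:ℝ) * T + ((-n : ℤ) : ℝ) * T = s + (-2 * n : ℤ) * T := by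
        push_cast; ring
      rw [h2]
      have : φ (s + ((-2 * n : ℤ) : ℝ) * T) zs = φ s (φ ((-2 * n : ℤ) * T) zs) := hφadd _ _ _
      rw [this, hint, hs]
    rcases eq_or_lt_of_le hr0 with h | h
    · exact ⟨n, by linarith⟩
    · exact absurd hrper (hmin _ h hrT)
  -- σ zs = φ a zs
  obtain ⟨a, ha⟩ := hmaps zs hzs
  -- σ σ zs = φ (2a) zs = zs
  have h2a : φ (a + a) zs = zs := by
    have := hinv zs hzs
    rw [ha] at this
    rw [hsym a zs hzs, ha, ← hφadd] at this
    exact this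
  obtain ⟨n, hn⟩ := hstab _ h2a
  -- split on parity of n
  rcases Int.even_or_odd n with ⟨k, hk⟩ | ⟨k, hk⟩
  · -- a = k * T, so σ zs = zs
    have hazs : σ zs = zs := by
      have hak : a = (k : ℝ) * T := by
        have : (n : ℝ) = (k : ℝ) + (k : ℝ) := by exact_mod_cast congrArg Int.cast hk
        nlinarith [hn]
      rw [ha, hak, hint k]
    intro z ⟨t, ht⟩
    left
    rw [ht, hsym t zs hzs, hazs]
  · -- a = k * T + T/2
    have hazs : σ zs = φ (T / 2) zs := by
      have hak : a = (k : ℝ) * T + T / 2 := by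
        have : (n : ℝ) = 2 * (k : ℝ) + 1 := by exact_mod_cast congrArg Int.cast hk
        nlinarith [hn]
      rw [ha, hak]
      have : φ ((k:ℝ) * T + T / 2) zs = φ (T/2) (φ ((k:ℝ)*T) zs) := by
        rw [← hφadd]; ring_nf
      rw [this]
      have := hint k
      push_cast at this
      rw [this]
    intro z ⟨t, ht⟩
    right
    rw [ht, hsym t zs hzs, hazs, ← hφadd, ← hφadd, add_comm]
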